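/- Let (A,≤) be a 1-quasi-hereditary algebra and j ∈ Q_0; for i ≤ j identify Δ(i) with the unique submodule of Δ(j) in Loc_i(Δ(j)) (all standard modules being viewed inside Δ(n)). Then a subset M ⊆ Δ(j) is a submodule if and only if M = Σ_{i∈Λ} Δ(i) for some Λ ⊆ Λ_(j). In particular, Loc_i(Δ(j)) = {Δ(i)} if i ∈ Λ_(j) and Loc_i(Δ(j)) = ∅ if i ∉ Λ_(j), and rad Δ(j) = Σ_{i◁j} Δ(i), the sum over the lower neighbours i of j. -/

import Mathlib

open scoped Classical

noncomputable section

/-! ### Basic notions for (1-)quasi-hereditary algebras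

`K` is an algebraically closed field, `A` a basic finite-dimensional `K`-algebra
with complete set of primitive orthogonal idempotents `e i` indexed by the
vertex set `ι` carrying a partial order `le`. -/

section Core

variable (K : Type) [Field K] (A : Type) [Ring A] [Algebra K A]

/-- The `K`-linear endomorphism `m ↦ a • m` of an `A`-module `M`. -/
def hitK (a : A) (M : Type) [AddCommGroup M] [Module K M] [Module A M]
    [IsScalarTower K A M] : M →ₗ[K] M where
  toFun m := a • m
  map_add' := smul_add a
  map_smul' k m := by
    simp only [RingHom.id_apply]
    exact (smul_comm k a m).symm

/-- Jordan–Hölder multiplicity `[M : S(i)] = dim_K (e_i • M)`, which is the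
correct composition multiplicity for a basic algebra over an algebraically
closed field. -/
def cmult (a : A) (M : Type) [AddCommGroup M] [Module K M] [Module A M]
    [IsScalarTower K A M] : ℕ :=
  Module.finrank K (LinearMap.range (hitK K A a M))

/-- The radical of a module: intersection of all maximal submodules. -/
def radM (M : Type) [AddCommGroup M] [Module A M] : Submodule A M :=
  sInf {N | IsCoatom N}

/-- The socle of a module: sum of all simple submodules. -/
def socM (M : Type) [AddCommGroup M] [Module A M] : Submodule A M :=
  sSup {N | IsAtom N}

/-- The top of a module, `M / rad M`. -/
abbrev topM (M : Type) [AddCommGroup M] [Module A M] : Type := M ⧸ radM A M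

variable {ι : Type}

/-- The projective indecomposable module `P(i) = A e_i`. -/
def Pmod (e : ι → A) (i : ι) : Submodule A A := Submodule.span A {e i}

/-- The simple module `S(i) = top P(i)`. -/
abbrev Smod (e : ι → A) (i : ι) : Type := topM A ↥(Pmod A e i)

/-- The subquotient `N'/N` associated to a pair of submodules. -/
abbrev subQuot {M : Type} [AddCommGroup M] [Module A M] (N N' : Submodule A M) : Type :=
  ↥N' ⧸ Submodule.comap N'.subtype N

/-- The kernel of `P(i) ↠ Δ(i)`: the smallest submodule of `P(i)` such that all
composition factors `S(j)` of the quotient satisfy `j ≤ i`. -/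
def delKer (le : ι → ι → Prop) (e : ι → A) (i : ι) : Submodule A ↥(Pmod A e i) :=
  sInf {N | ∀ j, ¬ le j i → cmult K A (e j) (↥(Pmod A e i) ⧸ N) = 0}

/-- The standard module `Δ(i)`: the largest quotient of `P(i)` all of whose
composition factors `S(j)` satisfy `j ≤ i`. -/
abbrev Dmod (le : ι → ι → Prop) (e : ι → A) (i : ι) : Type :=
  ↥(Pmod A e i) ⧸ delKer K A le e i

/-- The costandard module `∇(i)`, as the largest submodule of (an injective
envelope) `Ii` of `S(i)` all of whose composition factors `S(j)` satisfy `j ≤ i`. -/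
def nabla (le : ι → ι → Prop) (e : ι → A) (i : ι) (Ii : Type) [AddCommGroup Ii]
    [Module K Ii] [Module A Ii] [IsScalarTower K A Ii] : Submodule A Ii :=
  sSup {N | ∀ j, ¬ le j i → cmult K A (e j) ↥N = 0}

/-- `Ii` is (a copy of) the injective indecomposable module `I(i)`:
injective with socle isomorphic to `S(i)`. -/
def IsInjEnv (e : ι → A) (i : ι) (Ii : Type) [AddCommGroup Ii] [Module A Ii] : Prop :=
  Module.Injective A Ii ∧ Nonempty (↥(socM A Ii) ≃ₗ[A] Smod A e i)

/-- `Loc_i(M)`: the set of local submodules of `M` with top isomorphic to `S(i)`,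
i.e. images of nonzero homomorphisms `P(i) → M`. -/
def Loc (e : ι → A) (i : ι) (M : Type) [AddCommGroup M] [Module A M] :
    Set (Submodule A M) :=
  {N | ∃ f : ↥(Pmod A e i) →ₗ[A] M, f ≠ 0 ∧ LinearMap.range f = N}

/-- `Loc_i(N)` for a submodule `N ≤ M`, viewed inside the ambient module `M`:
the local submodules of `M` with top `S(i)` which are contained in `N`. -/
def LocIn (e : ι → A) (i : ι) {M : Type} [AddCommGroup M] [Module A M]
    (N : Submodule A M) : Set (Submodule A M) :=
  {L | L ∈ Loc A e i M ∧ L ≤ N}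

end Core

section Order

variable {ι : Type}

/-- Strict order associated to `le`. -/
def sLT (le : ι → ι → Prop) (a b : ι) : Prop := le a b ∧ a ≠ b

/-- `a ◁ b` : `a < b` and `a`, `b` are neighbours with respect to `le`. -/
def Nbr (le : ι → ι → Prop) (a b : ι) : Prop :=
  sLT le a b ∧ ∀ c, le a c → le c b → c = a ∨ c = b

end Order

section Filtrations

variable (K : Type) [Field K] (A : Type) [Ring A] [Algebra K A] {ι : Type}

/-- A filtration of `M` by submodules all of whose subquotients are isomorphic to
members of the family `F` (e.g. a `Δ`-good or `∇`-good filtration). -/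
structure GoodFilt (M : Type) [AddCommGroup M] [Module A M]
    (F : ι → ModuleCat.{0} A) : Type where
  len : ℕ
  D : Fin (len + 1) → Submodule A M
  mono : Monotone D
  first : D 0 = ⊥
  last : D (Fin.last len) = ⊤
  quotGood : ∀ t : Fin len, ∃ i : ι,
    Nonempty (subQuot A (D t.castSucc) (D t.succ) ≃ₗ[A] ↥(F i))

end Filtrations

/-- The multiplicity `(M : F(i))` of `F i` in a good filtration: the number of
subquotients isomorphic to `F i`. -/
def GoodFilt.cnt {A : Type} [Ring A] {ι : Type} {M : Type} [AddCommGroup M]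
    [Module A M] {F : ι → ModuleCat.{0} A} (fl : GoodFilt A M F) (i : ι) : ℕ :=
  Nat.card {t : Fin fl.len //
    Nonempty (subQuot A (fl.D t.castSucc) (fl.D t.succ) ≃ₗ[A] ↥(F i))}

section Filtrations
variable (K : Type) [Field K] (A : Type) [Ring A] [Algebra K A] {ι : Type}

/-- A Jordan–Hölder filtration (composition series) of `M`. -/
structure JHFilt (M : Type) [AddCommGroup M] [Module A M] : Type where
  len : ℕ
  D : Fin (len + 1) → Submodule A M
  mono : Monotone D
  first : D 0 = ⊥
  last : D (Fin.last len) = ⊤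
  simple : ∀ t : Fin len, IsSimpleModule A (subQuot A (D t.castSucc) (D t.succ))

/-- The family of standard modules, as objects of `ModuleCat A`. -/
def Dcat (le : ι → ι → Prop) (e : ι → A) : ι → ModuleCat.{0} A :=
  fun i => ModuleCat.of A (Dmod K A le e i)

/-- The family of costandard modules relative to a choice `Ifam` of injective
envelopes, as objects of `ModuleCat A`. -/
def Ncat (le : ι → ι → Prop) (e : ι → A) (Ifam : ι → Type)
    [∀ l, AddCommGroup (Ifam l)] [∀ l, Module K (Ifam l)] [∀ l, Module A (Ifam l)]
    [∀ l, IsScalarTower K A (Ifam l)] : ι → ModuleCat.{0} A :=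
  fun i => ModuleCat.of A ↥(nabla K A le e i (Ifam i))

end Filtrations

section QH

variable (K : Type) [Field K] (A : Type) [Ring A] [Algebra K A]
variable {ι : Type} [Fintype ι]

/-- `A` (given by the complete set `e` of primitive orthogonal idempotents of a
basic algebra, and the partial order `le` on the vertex set `ι`) is a
1-quasi-hereditary algebra. -/
structure OneQH (le : ι → ι → Prop) (e : ι → A) : Prop where
  /- finite dimensional algebra -/
  fd : FiniteDimensional K A
  /- `le` is a partial order on the vertex set -/
  le_refl : ∀ i, le i i
  le_trans : ∀ i j k, le i j → le j k → le i k
  le_antisymm : ∀ i j, le i j → le j i → i = j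
  /- `e` is a complete set of primitive orthogonal idempotents, `A` basic -/
  idem : ∀ i, e i * e i = e i
  orth : ∀ i j, i ≠ j → e i * e j = 0
  sum_one : ∑ i, e i = 1
  simple : ∀ i, IsSimpleModule A (Smod A e i)
  basic : ∀ i j, Nonempty (Smod A e i ≃ₗ[A] Smod A e j) → i = j
  allSimple : ∀ (M : Type) [AddCommGroup M] [Module A M], IsSimpleModule A M →
      ∃ i, Nonempty (M ≃ₗ[A] Smod A e i)
  /- (1) there is a smallest and a largest element -/
  ex_min : ∃ m, ∀ i, le m i
  ex_max : ∃ m, ∀ i, le i m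
  /- quasi-heredity and axiom (2): `[Δ(i):S(j)] = (P(j):Δ(i)) = 1` for `j ≤ i`,
     and `(P(j):Δ(i)) = 0` unless `i ≥ j` -/
  delta_mult : ∀ i j, le j i → cmult K A (e j) (Dmod K A le e i) = 1
  pgood : ∀ j, Nonempty (GoodFilt A ↥(Pmod A e j) (Dcat K A le e))
  pmult_one : ∀ j i, le j i →
      ∀ fl : GoodFilt A ↥(Pmod A e j) (Dcat K A le e), fl.cnt i = 1
  pmult_zero : ∀ j i, ¬ le j i →
      ∀ fl : GoodFilt A ↥(Pmod A e j) (Dcat K A le e), fl.cnt i = 0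
  /- (3) `soc P(j) ≅ S(min)` and `top I(j) ≅ S(min)` -/
  soc_p : ∀ m, (∀ i, le m i) → ∀ j,
      Nonempty (↥(socM A ↥(Pmod A e j)) ≃ₗ[A] Smod A e m)
  top_i : ∀ m, (∀ i, le m i) → ∀ j, ∀ (Ij : Type) [AddCommGroup Ij] [Module K Ij]
      [Module A Ij] [IsScalarTower K A Ij], IsInjEnv A e j Ij →
      Nonempty (topM A Ij ≃ₗ[A] Smod A e m)
  /- (4) `Δ(i) ↪ Δ(max)` and `∇(max) ↠ ∇(i)` -/
  delta_emb : ∀ mx, (∀ i, le i mx) → ∀ i,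
      ∃ f : Dmod K A le e i →ₗ[A] Dmod K A le e mx, Function.Injective f
  nabla_surj : ∀ mx, (∀ i, le i mx) → ∀ i,
      ∀ (Imx Ii : Type) [AddCommGroup Imx] [Module K Imx] [Module A Imx]
        [IsScalarTower K A Imx] [AddCommGroup Ii] [Module K Ii] [Module A Ii]
        [IsScalarTower K A Ii],
      IsInjEnv A e mx Imx → IsInjEnv A e i Ii →
      ∃ g : ↥(nabla K A le e mx Imx) →ₗ[A] ↥(nabla K A le e i Ii),
        Function.Surjective g

end QH
section Quiver

/-- Paths in a quiver with vertex set `ι` and arrow sets `Arr a b`. -/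
inductive PathIn {ι : Type} (Arr : ι → ι → Type) : ι → ι → Type
  | nil (a : ι) : PathIn Arr a a
  | cons {a b c : ι} (p : PathIn Arr a b) (α : Arr b c) : PathIn Arr a c

variable {ι : Type} {Arr : ι → ι → Type}

/-- Evaluation of a path in an algebra `A`, given the images `e` of the trivial
paths and `arr` of the arrows.  A path `a → ⋯ → b` lands in `e b * A * e a`. -/
def PathIn.eval (A : Type) [Ring A] (e : ι → A) (arr : ∀ a b : ι, Arr a b → A) :
    ∀ {a b : ι}, PathIn Arr a b → A
  | _, _, .nil a => e a
  | _, _, .cons (b := b) (c := c) p α => arr b c α * PathIn.eval A e arr p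

/-- A path is increasing with respect to the strict relation `lt`. -/
def PathIn.Up (lt : ι → ι → Prop) : ∀ {a b : ι}, PathIn Arr a b → Prop
  | _, _, .nil _ => True
  | _, _, .cons (b := b) (c := c) p _ => PathIn.Up lt p ∧ lt b c

/-- Concatenation of paths. -/
def PathIn.comp {a b c : ι} (p : PathIn Arr a b) : PathIn Arr b c → PathIn Arr a c
  | .nil _ => p
  | .cons q α => .cons (p.comp q) α

/-- A path `p` from `j` to `k` is of the form `p(j,i,k)`: an increasing path from
`j` to `i` followed by a decreasing path from `i` to `k`
(`j = j₁ < ⋯ < jₘ < i > k₁ > ⋯ > kᵣ = k`). -/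
def IsHook (le : ι → ι → Prop) {j k : ι} (i : ι) (p : PathIn Arr j k) : Prop :=
  ∃ (p₁ : PathIn Arr j i) (p₂ : PathIn Arr i k),
    p₁.Up (sLT le) ∧ p₂.Up (fun a b => sLT le b a) ∧ p = p₁.comp p₂

/-- The evaluation of a path starting at `j` lies in `P(j) = A e_j`. -/
lemma eval_mem_Pmod (A : Type) [Ring A] (e : ι → A) (arr : ∀ a b : ι, Arr a b → A)
    {j k : ι} (p : PathIn Arr j k) : PathIn.eval A e arr p ∈ Pmod A e j := by
  induction p with
  | nil =>
      simp only [PathIn.eval, Pmod]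
      exact Submodule.mem_span_singleton_self _
  | cons p α ih =>
      simp only [PathIn.eval]
      simpa [smul_eq_mul] using Submodule.smul_mem _ (arr _ _ α) ih

end Quiver
section Factor

variable (K : Type) [Field K] (A : Type) [Ring A] [Algebra K A] {ι : Type}

/-- The two-sided ideal `J(i) = A (∑_{l ∉ Λ_(i)} e_l) A` (as a left submodule of
`A`; it is closed under right multiplication). -/
def Jset (le : ι → ι → Prop) (e : ι → A) (i : ι) : Submodule A A :=
  Submodule.span A {x | ∃ l b, ¬ le l i ∧ x = e l * b}

/-- The ring congruence associated to the two-sided ideal `J(i)`. -/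
def Jcon (le : ι → ι → Prop) (e : ι → A) (i : ι) : RingCon A :=
  ringConGen (fun a b => a - b ∈ Jset A le e i)

/-- The factor algebra `A(i) = A / J(i)`. -/
abbrev Afac (le : ι → ι → Prop) (e : ι → A) (i : ι) : Type := (Jcon A le e i).Quotient

noncomputable instance (le : ι → ι → Prop) (e : ι → A) (i : ι) :
    Algebra K (Afac A le e i) :=
  RingHom.toAlgebra' ((Jcon A le e i).mk'.comp (algebraMap K A)) (by
    intro k x
    induction x using Quot.ind with
    | _ a =>
      show (Jcon A le e i).mk' (algebraMap K A k) * (Jcon A le e i).mk' a =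
        (Jcon A le e i).mk' a * (Jcon A le e i).mk' (algebraMap K A k)
      rw [← map_mul, ← map_mul, Algebra.commutes])

/-- A module is annihilated by (the left ideal) `Jd`, i.e. it is a module over
the factor algebra `A/Jd`. -/
def KilledBy (Jd : Submodule A A) (M : Type) [AddCommGroup M] [Module A M] : Prop :=
  ∀ x ∈ Jd, ∀ m : M, x • m = 0

/-- `M` is an injective object in the category of `A`-modules annihilated by the
two-sided ideal `Jd`, i.e. an injective `A/Jd`-module. -/
def RelInjective (Jd : Submodule A A) (M : Type) [AddCommGroup M] [Module A M] : Prop :=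
  ∀ (X Y : Type) [AddCommGroup X] [Module A X] [AddCommGroup Y] [Module A Y],
    KilledBy A Jd X → KilledBy A Jd Y →
    ∀ (f : X →ₗ[A] Y), Function.Injective f →
    ∀ (g : X →ₗ[A] M), ∃ h : Y →ₗ[A] M, ∀ x, h (f x) = g x

/-- `M` is indecomposable (and nonzero). -/
def Indecomp (M : Type) [AddCommGroup M] [Module A M] : Prop :=
  (⊤ : Submodule A M) ≠ ⊥ ∧
  ∀ N N' : Submodule A M, IsCompl N N' → N = ⊥ ∨ N' = ⊥

/-- `T` is (a copy of) the indecomposable direct summand `T(i)` of the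
characteristic tilting module: the unique indecomposable module which is both
`Δ`-good and `∇`-good, with `(T(i):Δ(j)) = (T(i):∇(j)) = 0` for `j ≰ i` and
`(T(i):Δ(i)) = (T(i):∇(i)) = 1`; here the costandard modules are computed inside
a chosen family `Ifam` of injective envelopes. -/
def IsTiltSummand (le : ι → ι → Prop) (e : ι → A) (Ifam : ι → Type)
    [∀ l, AddCommGroup (Ifam l)] [∀ l, Module K (Ifam l)] [∀ l, Module A (Ifam l)]
    [∀ l, IsScalarTower K A (Ifam l)] (i : ι) (T : Type) [AddCommGroup T]
    [Module A T] : Prop :=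
  Indecomp A T ∧
  Nonempty (GoodFilt A T (Dcat K A le e)) ∧
  Nonempty (GoodFilt A T (Ncat K A le e Ifam)) ∧
  (∀ j, ¬ le j i →
    (∀ fl : GoodFilt A T (Dcat K A le e), fl.cnt j = 0) ∧
    (∀ fl : GoodFilt A T (Ncat K A le e Ifam), fl.cnt j = 0)) ∧
  (∀ fl : GoodFilt A T (Dcat K A le e), fl.cnt i = 1) ∧
  (∀ fl : GoodFilt A T (Ncat K A le e Ifam), fl.cnt i = 1)

end Factor
section FreeAlg

variable (K : Type) [Field K] {ι : Type} (Arr : ι → ι → Type)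

/-- The free `K`-algebra on the vertices and arrows of the quiver;
the path algebra `KQ` is its quotient by the quiver relations `quiverRels`. -/
abbrev FreeQ : Type := FreeAlgebra K (ι ⊕ Σ a : ι, Σ b : ι, Arr a b)

/-- The generator corresponding to the trivial path at a vertex. -/
def genV (i : ι) : FreeQ K Arr := FreeAlgebra.ι K (Sum.inl i)

/-- The generator corresponding to an arrow. -/
def genA (a b : ι) (α : Arr a b) : FreeQ K Arr := FreeAlgebra.ι K (Sum.inr ⟨a, b, α⟩)

/-- The defining relations of the path algebra `KQ` as a quotient of the free
algebra on vertices and arrows: the `e_i` are orthogonal idempotents summing to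
`1`, and `e_b · α · e_a = α` for an arrow `α : a → b`. -/
def quiverRels [Fintype ι] : Set (FreeQ K Arr) :=
  {x | ∃ i, x = genV K Arr i * genV K Arr i - genV K Arr i} ∪
  {x | ∃ i j, i ≠ j ∧ x = genV K Arr i * genV K Arr j} ∪
  {x | x = 1 - ∑ i : ι, genV K Arr i} ∪
  {x | ∃ a b α, x = genV K Arr b * genA K Arr a b α * genV K Arr a - genA K Arr a b α}

variable (A : Type) [Ring A] [Algebra K A]

/-- The canonical map from the free algebra on vertices and arrows to `A`,
sending the vertex generators to the idempotents `e i` and the arrow generators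
to the chosen arrow elements of `A`. -/
def toA (e : ι → A) (arr : ∀ a b : ι, Arr a b → A) : FreeQ K Arr →ₐ[K] A :=
  FreeAlgebra.lift K (fun g => Sum.rec (fun i => e i) (fun s => arr s.1 s.2.1 s.2.2) g)

/-- The two-sided ideal generated by a subset of a (noncommutative) ring,
as a left ideal. -/
def tsSpan (R : Type) [Ring R] (S : Set R) : Ideal R :=
  Ideal.span {x | ∃ r ∈ S, ∃ y, x = r * y}

end FreeAlg

/-! ### STATEMENT 6
Submodules of `Δ(j)`: `Loc_i(Δ(j)) = {Δ(i)}` for `i ≤ j` and `= ∅` otherwise;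
every submodule of `Δ(j)` is of the form `∑_{i ∈ Λ} Δ(i)` with `Λ ⊆ Λ_(j)`; and
`rad Δ(j) = ∑_{i ◁ j} Δ(i)`, the sum over the lower neighbours of `j`. -/
section Helpers

variable {K A ι : Type} [Field K] [Ring A] [Algebra K A] [Fintype ι]
  {le : ι → ι → Prop} {e : ι → A}

private lemma findim_quot' (h : OneQH K A le e) (i : ι) (N : Submodule A ↥(Pmod A e i)) :
    FiniteDimensional K (↥(Pmod A e i) ⧸ N) := by
  have := h.fd
  have : FiniteDimensional K ↥(Pmod A e i) :=
    FiniteDimensional.of_injective ((Pmod A e i).subtype.restrictScalars K)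
      Subtype.coe_injective
  exact Module.Finite.of_surjective (N.mkQ.restrictScalars K) (Submodule.mkQ_surjective N)

private lemma smul_zero_of_cmult_zero {M : Type} [AddCommGroup M] [Module K M] [Module A M]
    [IsScalarTower K A M] [FiniteDimensional K M] {a : A}
    (hc : cmult K A a M = 0) (m : M) : a • m = 0 := by
  have hbot : LinearMap.range (hitK K A a M) = ⊥ := Submodule.finrank_eq_zero.mp hc
  have hm : hitK K A a M m ∈ LinearMap.range (hitK K A a M) := LinearMap.mem_range_self _ m
  rw [hbot, Submodule.mem_bot] at hm
  exact hm

private lemma exists_smul_ne_zero {M : Type} [AddCommGroup M] [Module K M] [Module A M]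
    [IsScalarTower K A M] {a : A} (hc : cmult K A a M = 1) : ∃ m : M, a • m ≠ 0 := by
  by_contra hno
  push_neg at hno
  have hz : LinearMap.range (hitK K A a M) = ⊥ := by
    rw [LinearMap.range_eq_bot]
    ext m
    exact hno m
  rw [cmult, hz] at hc
  simp at hc

private lemma e_smul_delta (h : OneQH K A le e) {i l : ι} (hl : ¬ le l i)
    (x : Dmod K A le e i) : e l • x = 0 := by
  obtain ⟨y, rfl⟩ := Submodule.Quotient.mk_surjective _ x
  rw [← Submodule.Quotient.mk_smul, Submodule.Quotient.mk_eq_zero]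
  apply Submodule.mem_sInf.mpr
  intro N hN
  have hc := hN l hl
  have : FiniteDimensional K (↥(Pmod A e i) ⧸ N) := findim_quot' h i N
  have h0 : e l • (Submodule.Quotient.mk y : ↥(Pmod A e i) ⧸ N) = 0 :=
    smul_zero_of_cmult_zero hc _
  rwa [← Submodule.Quotient.mk_smul, Submodule.Quotient.mk_eq_zero] at h0


private def epi (e : ι → A) (i : ι) : ↥(Pmod A e i) :=
  ⟨e i, Submodule.mem_span_singleton_self _⟩

private lemma exists_smul_epi (i : ι) (x : ↥(Pmod A e i)) : ∃ a : A, x = a • epi e i := by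
  obtain ⟨a, ha⟩ := Submodule.mem_span_singleton.mp x.2
  exact ⟨a, Subtype.ext (by rw [Submodule.coe_smul]; exact ha.symm)⟩

private lemma smul_epi (h : OneQH K A le e) (i : ι) : e i • epi e i = epi e i :=
  Subtype.ext (by show e i • e i = e i; rw [smul_eq_mul, h.idem i])

private def toHom {M : Type} [AddCommGroup M] [Module A M] (e : ι → A) (i : ι) (m : M) :
    ↥(Pmod A e i) →ₗ[A] M where
  toFun x := (x : A) • m
  map_add' x y := by
    show ((x + y : ↥(Pmod A e i)) : A) • m = _
    rw [Submodule.coe_add, add_smul]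
  map_smul' a x := by
    show ((a • x : ↥(Pmod A e i)) : A) • m = _
    rw [Submodule.coe_smul, RingHom.id_apply, smul_eq_mul, mul_smul]

private lemma apply_eq_smul_epi {M : Type} [AddCommGroup M] [Module A M] {i : ι}
    (f : ↥(Pmod A e i) →ₗ[A] M) (x : ↥(Pmod A e i)) : ∃ a : A, f x = a • f (epi e i) := by
  obtain ⟨a, rfl⟩ := exists_smul_epi i x
  exact ⟨a, f.map_smul a _⟩

private lemma range_f {M : Type} [AddCommGroup M] [Module A M] {i : ι}
    (f : ↥(Pmod A e i) →ₗ[A] M) :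
    LinearMap.range f = Submodule.span A {f (epi e i)} := by
  apply le_antisymm
  · rintro _ ⟨x, rfl⟩
    obtain ⟨a, hx⟩ := apply_eq_smul_epi f x
    rw [hx]
    exact Submodule.smul_mem _ a (Submodule.mem_span_singleton_self _)
  · rw [Submodule.span_singleton_le_iff_mem]
    exact ⟨_, rfl⟩

private lemma f_eq_zero {M : Type} [AddCommGroup M] [Module A M] {i : ι}
    {f : ↥(Pmod A e i) →ₗ[A] M} (hf : f (epi e i) = 0) : f = 0 := by
  apply LinearMap.ext
  intro x
  obtain ⟨a, hx⟩ := apply_eq_smul_epi f x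
  rw [hx, hf, smul_zero, LinearMap.zero_apply]

private lemma f_epi_fix {M : Type} [AddCommGroup M] [Module A M] (h : OneQH K A le e) {i : ι}
    (f : ↥(Pmod A e i) →ₗ[A] M) : e i • f (epi e i) = f (epi e i) := by
  rw [← f.map_smul, smul_epi h i]

private lemma span_K_smul {M : Type} [AddCommGroup M] [Module K M] [Module A M]
    [IsScalarTower K A M] {c : K} (hc : c ≠ 0) (w : M) :
    Submodule.span A {c • w} = Submodule.span A {w} := by
  apply le_antisymm
  · rw [Submodule.span_singleton_le_iff_mem, ← algebraMap_smul A c w]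
    exact Submodule.smul_mem _ _ (Submodule.mem_span_singleton_self _)
  · rw [Submodule.span_singleton_le_iff_mem]
    refine Submodule.mem_span_singleton.mpr ⟨algebraMap K A c⁻¹, ?_⟩
    rw [algebraMap_smul, smul_smul, inv_mul_cancel₀ hc, one_smul]

private lemma loc_unique (h : OneQH K A le e) {i j : ι} (hij : le i j)
    {N N' : Submodule A (Dmod K A le e j)}
    (hN : N ∈ Loc A e i (Dmod K A le e j)) (hN' : N' ∈ Loc A e i (Dmod K A le e j)) :
    N = N' := by
  obtain ⟨f, hf0, rfl⟩ := hN
  obtain ⟨g, hg0, rfl⟩ := hN'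
  have hfe : f (epi e i) ≠ 0 := fun hz => hf0 (f_eq_zero hz)
  have hge : g (epi e i) ≠ 0 := fun hz => hg0 (f_eq_zero hz)
  have hdim : Module.finrank K
      ↥(LinearMap.range (hitK K A (e i) (Dmod K A le e j))) = 1 := h.delta_mult j i hij
  set W := LinearMap.range (hitK K A (e i) (Dmod K A le e j)) with hW
  have hfW : f (epi e i) ∈ W := ⟨f (epi e i), f_epi_fix h f⟩
  have hgW : g (epi e i) ∈ W := ⟨g (epi e i), f_epi_fix h g⟩
  have hv : (⟨f (epi e i), hfW⟩ : ↥W) ≠ 0 := fun hz => hfe (congrArg Subtype.val hz)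
  have hspan := (finrank_eq_one_iff_of_nonzero _ hv).mp hdim
  have hmem : (⟨g (epi e i), hgW⟩ : ↥W) ∈
      Submodule.span K {(⟨f (epi e i), hfW⟩ : ↥W)} := by rw [hspan]; trivial
  obtain ⟨c, hc⟩ := Submodule.mem_span_singleton.mp hmem
  have hc' : c • f (epi e i) = g (epi e i) := congrArg Subtype.val hc
  have hcne : c ≠ 0 := by
    rintro rfl
    rw [zero_smul] at hc'
    exact hge hc'.symm
  rw [range_f f, range_f g, ← hc', span_K_smul hcne]

set_option linter.unusedSectionVars false

private lemma toHom_epi (h : OneQH K A le e) {M : Type} [AddCommGroup M] [Module A M]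
    {i : ι} (m : M) : toHom e i (e i • m) (epi e i) = e i • m := by
  show (e i : A) • (e i • m) = e i • m
  rw [smul_smul, h.idem i]

private lemma range_toHom (h : OneQH K A le e) {M : Type} [AddCommGroup M] [Module A M]
    {i : ι} (m : M) :
    LinearMap.range (toHom e i (e i • m)) = Submodule.span A {e i • m} := by
  rw [range_f, toHom_epi h]

private lemma loc_mem (h : OneQH K A le e) {i j : ι} {m : Dmod K A le e j}
    (hm : e i • m ≠ 0) :
    LinearMap.range (toHom e i (e i • m)) ∈ Loc A e i (Dmod K A le e j) := by
  refine ⟨toHom e i (e i • m), fun h0 => hm ?_, rfl⟩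
  rw [← toHom_epi h m, h0, LinearMap.zero_apply]

private lemma smul_mem_range_toHom (h : OneQH K A le e) {M : Type} [AddCommGroup M]
    [Module A M] {i : ι} (m : M) : e i • m ∈ LinearMap.range (toHom e i (e i • m)) :=
  ⟨epi e i, toHom_epi h m⟩

private lemma range_toHom_le (h : OneQH K A le e) {M : Type} [AddCommGroup M] [Module A M]
    {i : ι} {m : M} {M' : Submodule A M} (hm : m ∈ M') :
    LinearMap.range (toHom e i (e i • m)) ≤ M' := by
  rw [range_toHom h, Submodule.span_singleton_le_iff_mem]
  exact Submodule.smul_mem _ _ hm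

/-- the image of `e j` in `Δ(j)` -/
private def vbar (K : Type) [Field K] (A : Type) [Ring A] [Algebra K A] {ι : Type}
    (le : ι → ι → Prop) (e : ι → A) (j : ι) : Dmod K A le e j :=
  Submodule.Quotient.mk (epi e j)

private lemma smul_vbar (h : OneQH K A le e) (j : ι) :
    e j • vbar K A le e j = vbar K A le e j := by
  show e j • Submodule.Quotient.mk (epi e j) = _
  rw [← Submodule.Quotient.mk_smul, smul_epi h j]
  rfl

private lemma exists_smul_vbar (j : ι) (z : Dmod K A le e j) :
    ∃ a : A, z = a • vbar K A le e j := by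
  obtain ⟨y, rfl⟩ := Submodule.Quotient.mk_surjective _ z
  obtain ⟨a, rfl⟩ := exists_smul_epi j y
  exact ⟨a, Submodule.Quotient.mk_smul _ _ _⟩

private lemma vbar_ne (h : OneQH K A le e) (j : ι) : vbar K A le e j ≠ 0 := by
  intro h0
  obtain ⟨m, hm⟩ := exists_smul_ne_zero (h.delta_mult j j (h.le_refl j))
  obtain ⟨a, rfl⟩ := exists_smul_vbar j m
  rw [h0, smul_zero, smul_zero] at hm
  exact hm rfl

private lemma eq_top_of_vbar_mem {j : ι} {N : Submodule A (Dmod K A le e j)}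
    (hv : vbar K A le e j ∈ N) : N = ⊤ := by
  rw [eq_top_iff]
  intro z _
  obtain ⟨a, rfl⟩ := exists_smul_vbar j z
  exact Submodule.smul_mem _ _ hv

private lemma exists_K_smul_vbar (h : OneQH K A le e) {j : ι} (m : Dmod K A le e j) :
    ∃ c : K, e j • m = c • vbar K A le e j := by
  have hdim : Module.finrank K
      ↥(LinearMap.range (hitK K A (e j) (Dmod K A le e j))) = 1 :=
    h.delta_mult j j (h.le_refl j)
  set W := LinearMap.range (hitK K A (e j) (Dmod K A le e j)) with hW
  have hvW : vbar K A le e j ∈ W := ⟨vbar K A le e j, smul_vbar h j⟩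
  have hv : (⟨vbar K A le e j, hvW⟩ : ↥W) ≠ 0 :=
    fun hz => vbar_ne h j (congrArg Subtype.val hz)
  have hspan := (finrank_eq_one_iff_of_nonzero _ hv).mp hdim
  have hmW : e j • m ∈ W := ⟨m, rfl⟩
  have hmem : (⟨e j • m, hmW⟩ : ↥W) ∈
      Submodule.span K {(⟨vbar K A le e j, hvW⟩ : ↥W)} := by rw [hspan]; trivial
  obtain ⟨c, hc⟩ := Submodule.mem_span_singleton.mp hmem
  exact ⟨c, (congrArg Subtype.val hc).symm⟩

private lemma smul_zero_on_sub (h : OneQH K A le e) {i j l : ι}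
    {S : Submodule A (Dmod K A le e j)} (iso : ↥S ≃ₗ[A] Dmod K A le e i)
    (hl : ¬ le l i) {x : Dmod K A le e j} (hx : x ∈ S) : e l • x = 0 := by
  have h0 : e l • (⟨x, hx⟩ : ↥S) = 0 := by
    apply iso.injective
    rw [map_smul, map_zero, e_smul_delta h hl]
  have := congrArg (Subtype.val) h0
  rwa [Submodule.coe_smul, ZeroMemClass.coe_zero] at this

private lemma exists_smul_ne_on_sub (h : OneQH K A le e) {i j l : ι}
    {S : Submodule A (Dmod K A le e j)} (iso : ↥S ≃ₗ[A] Dmod K A le e i)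
    (hl : le l i) : ∃ x ∈ S, e l • x ≠ 0 := by
  obtain ⟨w, hw⟩ := exists_smul_ne_zero (h.delta_mult i l hl)
  refine ⟨(iso.symm w : ↥S), (iso.symm w).2, fun h0 => hw ?_⟩
  have : e l • iso.symm w = 0 := Subtype.ext (by
    rw [Submodule.coe_smul, ZeroMemClass.coe_zero]; exact h0)
  have := congrArg iso this
  rwa [map_smul, map_zero, LinearEquiv.apply_symm_apply] at this

private lemma exists_nbr (h : OneQH K A le e) {l j : ι} (hlj : le l j) (hne : l ≠ j) :
    ∃ i, le l i ∧ Nbr le i j := by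
  letI : Preorder ι :=
    { le := le, le_refl := h.le_refl, le_trans := h.le_trans }
  classical
  set s : Finset ι := Finset.univ.filter (fun c => le l c ∧ le c j ∧ c ≠ j) with hs
  have hls : l ∈ s := by
    simp only [hs, Finset.mem_filter, Finset.mem_univ, true_and]
    exact ⟨h.le_refl l, hlj, hne⟩
  obtain ⟨i, his, hmax⟩ : ∃ i ∈ s, ∀ x ∈ s, ¬ i < x := by
    obtain ⟨i, hi⟩ := Finset.exists_maximal (s := s) ⟨l, hls⟩
    exact ⟨i, hi.1, fun x hx hlt => (lt_iff_le_not_ge.mp hlt).2 (hi.2 hx hlt.le)⟩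
  simp only [hs, Finset.mem_filter, Finset.mem_univ, true_and] at his
  refine ⟨i, his.1, ⟨⟨his.2.1, his.2.2⟩, ?_⟩⟩
  intro c hic hcj
  by_cases hcj' : c = j
  · exact Or.inr hcj'
  · left
    by_contra hci
    apply hmax c
    · simp only [hs, Finset.mem_filter, Finset.mem_univ, true_and]
      exact ⟨h.le_trans l i c his.1 hic, hcj, hcj'⟩
    · exact lt_iff_le_not_ge.mpr ⟨hic, fun hc => hci (h.le_antisymm c i hc hic)⟩


private lemma radM_eq (M : Type) [AddCommGroup M] [Module A M] :
    radM A M = sInf {N | IsCoatom N} := rfl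

private lemma loc_iso (h : OneQH K A le e) {i j : ι} (hij : le i j)
    {N : Submodule A (Dmod K A le e j)} (hN : N ∈ Loc A e i (Dmod K A le e j)) :
    Nonempty (↥N ≃ₗ[A] Dmod K A le e i) := by
  obtain ⟨mx, hmx⟩ := h.ex_max
  obtain ⟨g, hg⟩ := h.delta_emb mx hmx j
  obtain ⟨φ, hφ⟩ := h.delta_emb mx hmx i
  obtain ⟨f, hf0, rfl⟩ := hN
  set ψ : ↥(Pmod A e i) →ₗ[A] Dmod K A le e mx :=
    φ ∘ₗ (delKer K A le e i).mkQ with hψ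
  have hψ0 : ψ ≠ 0 := by
    intro h0
    obtain ⟨w, hw⟩ := exists_smul_ne_zero (h.delta_mult i i (h.le_refl i))
    have hwne : w ≠ 0 := fun hz => hw (by rw [hz, smul_zero])
    obtain ⟨y, hy⟩ := Submodule.Quotient.mk_surjective _ w
    apply hwne
    have hphiw : φ w = 0 := by
      rw [← hy]
      have := congrArg (fun (t : ↥(Pmod A e i) →ₗ[A] Dmod K A le e mx) => t y) h0
      simpa [hψ] using this
    exact hφ (hphiw.trans (map_zero φ).symm)
  have hgf0 : g ∘ₗ f ≠ 0 := by
    intro h0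
    apply hf0
    apply LinearMap.ext
    intro x
    apply hg
    have hx : (g ∘ₗ f) x = 0 := by rw [h0]; rfl
    rw [LinearMap.zero_apply, map_zero]
    exact hx
  have hr : LinearMap.range (g ∘ₗ f) = LinearMap.range ψ :=
    loc_unique h (hmx i) ⟨g ∘ₗ f, hgf0, rfl⟩ ⟨ψ, hψ0, rfl⟩
  have h1 : LinearMap.range (g ∘ₗ f) = Submodule.map g (LinearMap.range f) :=
    LinearMap.range_comp _ _
  have h2 : LinearMap.range ψ = LinearMap.range φ := by
    rw [hψ, LinearMap.range_comp, Submodule.range_mkQ, Submodule.map_top]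
  exact ⟨((Submodule.equivMapOfInjective g hg (LinearMap.range f)).trans
    (LinearEquiv.ofEq _ _ (by rw [← h1, hr, h2]))).trans
    (LinearEquiv.ofInjective φ hφ).symm⟩

end Helpers
theorem stmt_6 {K A ι : Type} [Field K] [IsAlgClosed K] [Ring A] [Algebra K A]
    [Fintype ι] (le : ι → ι → Prop) (e : ι → A) (h : OneQH K A le e) (j : ι) :
    (∀ i, ¬ le i j → Loc A e i (Dmod K A le e j) = ∅) ∧
    (∀ i, le i j →
      ∃! N : Submodule A (Dmod K A le e j), N ∈ Loc A e i (Dmod K A le e j)) ∧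
    (∀ i, le i j → ∀ N ∈ Loc A e i (Dmod K A le e j),
      Nonempty (↥N ≃ₗ[A] Dmod K A le e i)) ∧
    (∀ D : ι → Submodule A (Dmod K A le e j),
      (∀ i, le i j → D i ∈ Loc A e i (Dmod K A le e j)) →
      (∀ M : Submodule A (Dmod K A le e j),
          ∃ Λ : Set ι, Λ ⊆ {i | le i j} ∧ M = ⨆ i ∈ Λ, D i) ∧
      radM A (Dmod K A le e j) = ⨆ i ∈ {i | Nbr le i j}, D i) := by
  
  classical
  have hfd := h.fd
  refine ⟨?_, ?_, ?_, ?_⟩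
  · -- Loc empty for i ≰ j
    intro i hij
    rw [Set.eq_empty_iff_forall_notMem]
    rintro N ⟨f, hf0, rfl⟩
    apply hf0
    apply f_eq_zero
    rw [← f_epi_fix h f]
    exact e_smul_delta h hij _
  · -- unique element of Loc for i ≤ j
    intro i hij
    obtain ⟨m, hm⟩ := exists_smul_ne_zero (h.delta_mult j i hij)
    exact ⟨_, loc_mem h hm, fun N hN => loc_unique h hij hN (loc_mem h hm)⟩
  · -- each element of Loc is iso to Δ(i)
    intro i hij N hN
    exact loc_iso h hij hN
  · intro D hD
    have isoD : ∀ i, le i j → Nonempty (↥(D i) ≃ₗ[A] Dmod K A le e i) :=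
      fun i hij => loc_iso h hij (hD i hij)
    constructor
    · -- every submodule is a sum of the D i
      intro M
      refine ⟨{i | le i j ∧ D i ≤ M}, fun i hi => hi.1, ?_⟩
      apply le_antisymm
      · intro m hm
        have hsum : m = ∑ i : ι, e i • m := by
          rw [← Finset.sum_smul, h.sum_one, one_smul]
        rw [hsum]
        apply Submodule.sum_mem
        intro i _
        by_cases h0 : e i • m = 0
        · rw [h0]; exact Submodule.zero_mem _
        · have hij : le i j := by
            by_contra hn
            exact h0 (e_smul_delta h hn m)
          have hrange : LinearMap.range (toHom e i (e i • m)) = D i :=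
            loc_unique h hij (loc_mem h h0) (hD i hij)
          have hDM : D i ≤ M := hrange ▸ range_toHom_le h hm
          have hmem : e i • m ∈ D i := hrange ▸ smul_mem_range_toHom h m
          exact Submodule.mem_iSup_of_mem i
            (Submodule.mem_iSup_of_mem ⟨hij, hDM⟩ hmem)
      · exact iSup_le fun i => iSup_le fun hi => hi.2
    · -- the radical
      have hnontriv : (⊤ : Submodule A (Dmod K A le e j)) ≠ ⊥ := by
        intro htop
        apply vbar_ne h j
        have hv : vbar K A le e j ∈ (⊤ : Submodule A (Dmod K A le e j)) :=
          Submodule.mem_top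
        rw [htop] at hv
        simpa using hv
      have hfdD : FiniteDimensional K (Dmod K A le e j) := findim_quot' h j _
      have hnoeth : IsNoetherian A (Dmod K A le e j) := isNoetherian_of_tower K inferInstance
      have hco : IsCoatomic (Submodule A (Dmod K A le e j)) := by
        apply CompleteLattice.coatomic_of_top_compact
        rw [← Submodule.fg_iff_compact]
        exact IsNoetherian.noetherian ⊤
      have claimB : ∀ N : Submodule A (Dmod K A le e j), IsCoatom N →
          ∀ i, le i j → i ≠ j → D i ≤ N := by
        intro N hN i hij hne
        by_contra hnle
        obtain ⟨d, hdD, hdN⟩ := SetLike.not_le_iff_exists.mp hnle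
        have hdle : d ∈ N ⊔ Submodule.span A {d} :=
          Submodule.mem_sup_right (Submodule.mem_span_singleton_self d)
        have hlt : N < N ⊔ Submodule.span A {d} :=
          lt_of_le_of_ne le_sup_left (fun heq => hdN (by rw [heq]; exact hdle))
        have hsup := hN.2 _ hlt
        have hvtop : vbar K A le e j ∈ N ⊔ Submodule.span A {d} := by
          rw [hsup]; trivial
        obtain ⟨n, hn, z, hz, hnz⟩ := Submodule.mem_sup.mp hvtop
        obtain ⟨a, rfl⟩ := Submodule.mem_span_singleton.mp hz
        have hnotji : ¬ le j i := fun hji => hne (h.le_antisymm i j hij hji)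
        have hz0 : e j • (a • d) = 0 :=
          smul_zero_on_sub h (isoD i hij).some hnotji (Submodule.smul_mem _ a hdD)
        have hvn : vbar K A le e j = e j • n := by
          conv_lhs => rw [← smul_vbar h j, ← hnz]
          rw [smul_add, hz0, add_zero]
        exact hN.1 (eq_top_of_vbar_mem (hvn ▸ Submodule.smul_mem N _ hn))
      rw [radM_eq]
      apply le_antisymm
      · -- rad ≤ sum over neighbours
        intro m hm
        obtain ⟨N0, hN0, -⟩ : ∃ N0, IsCoatom N0 ∧ (⊥ : Submodule A (Dmod K A le e j)) ≤ N0 := by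
          rcases hco.eq_top_or_exists_le_coatom ⊥ with hb | hok
          · exact absurd hb.symm hnontriv
          · exact hok
        have hmN0 : m ∈ N0 := sInf_le (show N0 ∈ {N | IsCoatom N} from hN0) hm
        have hvN0 : vbar K A le e j ∉ N0 := fun hv => hN0.1 (eq_top_of_vbar_mem hv)
        have hej : e j • m = 0 := by
          obtain ⟨c, hc⟩ := exists_K_smul_vbar h m
          by_cases hc0 : c = 0
          · rw [hc, hc0, zero_smul]
          · exfalso
            apply hvN0
            have hvm : vbar K A le e j = (algebraMap K A c⁻¹) • (e j • m) := by
              rw [hc, algebraMap_smul, smul_smul, inv_mul_cancel₀ hc0, one_smul]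
            rw [hvm]
            exact Submodule.smul_mem _ _ (Submodule.smul_mem _ _ hmN0)
        have hsum : m = ∑ l : ι, e l • m := by
          rw [← Finset.sum_smul, h.sum_one, one_smul]
        rw [hsum]
        apply Submodule.sum_mem
        intro l _
        by_cases h0 : e l • m = 0
        · rw [h0]; exact Submodule.zero_mem _
        · have hlj : le l j := by
            by_contra hn
            exact h0 (e_smul_delta h hn m)
          have hlne : l ≠ j := by rintro rfl; exact h0 hej
          obtain ⟨i, hli, hnbr⟩ := exists_nbr h hlj hlne
          have hij : le i j := hnbr.1.1
          obtain ⟨x, hxD, hx0⟩ := exists_smul_ne_on_sub h (isoD i hij).some hli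
          have hrx : LinearMap.range (toHom e l (e l • x)) = D l :=
            loc_unique h hlj (loc_mem h hx0) (hD l hlj)
          have hDlDi : D l ≤ D i := hrx ▸ range_toHom_le h hxD
          have hrm : LinearMap.range (toHom e l (e l • m)) = D l :=
            loc_unique h hlj (loc_mem h h0) (hD l hlj)
          have hmDl : e l • m ∈ D l := hrm ▸ smul_mem_range_toHom h m
          exact Submodule.mem_iSup_of_mem i
            (Submodule.mem_iSup_of_mem hnbr (hDlDi hmDl))
      · -- sum over neighbours ≤ rad
        apply iSup_le
        intro i
        apply iSup_le
        intro hnbr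
        apply le_sInf
        intro N hN
        exact claimB N hN i hnbr.1.1 hnbr.1.2
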